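/- Let G be a graph on n vertices in which every k-subset of vertices is an identifying set, with k ≥ 2. If s is an integer with log(C(n+1,2)) / log(n/(k−1)) < s ≤ n, then G contains an identifying set of size s. -/

import Mathlib

open Set

variable {V : Type*}

/-- The closed neighbourhood `N[x]` of a vertex. -/
def closedNbhd (G : SimpleGraph V) (x : V) : Set V :=
  insert x (G.neighborSet x)

/-- `C` is an identifying set: all sets `N[x] ∩ C` are nonempty and pairwise distinct. -/
def IsIdentifying (G : SimpleGraph V) (C : Set V) : Prop :=
  (∀ x : V, (closedNbhd G x ∩ C).Nonempty) ∧
    ∀ x y : V, closedNbhd G x ∩ C = closedNbhd G y ∩ C → x = y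

/-- Every `k`-subset of vertices is an identifying set. -/
def EveryKIdentifying (G : SimpleGraph V) (k : ℕ) : Prop :=
  ∀ C : Set V, C.ncard = k → IsIdentifying G C

lemma descFactorial_ratio (m n s : ℕ) (h : m ≤ n) :
    m.descFactorial s * n ^ s ≤ n.descFactorial s * m ^ s := by
  induction s with
  | zero => simp
  | succ s ih =>
    rw [Nat.descFactorial_succ, Nat.descFactorial_succ, pow_succ, pow_succ]
    have h1 : (m - s) * n ≤ (n - s) * m := by
      rw [Nat.sub_mul, Nat.sub_mul]
      exact tsub_le_tsub (by rw [mul_comm n m]) (Nat.mul_le_mul_left s h)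
    calc (m - s) * m.descFactorial s * (n ^ s * n)
        = ((m - s) * n) * (m.descFactorial s * n ^ s) := by ring
      _ ≤ ((n - s) * m) * (n.descFactorial s * m ^ s) := Nat.mul_le_mul h1 ih
      _ = (n - s) * n.descFactorial s * (m ^ s * m) := by ring

lemma choose_ratio (m n s : ℕ) (h : m ≤ n) :
    m.choose s * n ^ s ≤ n.choose s * m ^ s := by
  have := descFactorial_ratio m n s h
  rw [Nat.descFactorial_eq_factorial_mul_choose, Nat.descFactorial_eq_factorial_mul_choose] at this
  have hf : 0 < s.factorial := Nat.factorial_pos s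
  apply Nat.le_of_mul_le_mul_left _ hf
  calc s.factorial * (m.choose s * n ^ s) = s.factorial * m.choose s * n ^ s := by ring
    _ ≤ s.factorial * n.choose s * m ^ s := this
    _ = s.factorial * (n.choose s * m ^ s) := by ring

theorem stmt15 [Fintype V] (G : SimpleGraph V) (n k s : ℕ)
    (hn : Fintype.card V = n) (hk : 2 ≤ k) (hkn : k ≤ n)
    (h : EveryKIdentifying G k)
    (hs1 : Real.log ((n + 1).choose 2) / Real.log ((n : ℝ) / ((k : ℝ) - 1)) < (s : ℝ))
    (hsn : s ≤ n) :
    ∃ S : Set V, S.ncard = s ∧ IsIdentifying G S := by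
  classical
  set M : ℕ := (n + 1).choose 2 with hM
  have hn2 : 2 ≤ n := le_trans hk hkn
  have hk1n : k - 1 < n := lt_of_lt_of_le (Nat.sub_lt (by omega) one_pos) hkn
  -- Step 1: numeric inequality M * (k-1)^s < n^s
  have hnum : M * (k - 1) ^ s < n ^ s := by
    have hk1 : (1:ℝ) ≤ (k:ℝ) - 1 := by
      have : (2:ℝ) ≤ (k:ℝ) := by exact_mod_cast hk
      linarith
    have hr1 : (1:ℝ) < (n:ℝ) / ((k:ℝ) - 1) := by
      rw [lt_div_iff₀ (by linarith)]
      have : ((k:ℝ) - 1) < (n:ℝ) := by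
        have : (k:ℝ) ≤ (n:ℝ) := by exact_mod_cast hkn
        linarith
      linarith
    have hlogpos : 0 < Real.log ((n:ℝ) / ((k:ℝ) - 1)) := Real.log_pos hr1
    have hMpos : (0:ℝ) < (M:ℝ) := by
      have : 0 < M := Nat.choose_pos (by omega)
      exact_mod_cast this
    rw [div_lt_iff₀ hlogpos] at hs1
    have hlt : Real.log (M:ℝ) < Real.log (((n:ℝ) / ((k:ℝ) - 1)) ^ s) := by
      rw [Real.log_pow]; exact hs1.trans_eq rfl
    have hMr : (M:ℝ) < ((n:ℝ) / ((k:ℝ) - 1)) ^ s :=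
      (Real.log_lt_log_iff hMpos (pow_pos (by linarith) s)).mp hlt
    have key : (M:ℝ) * ((k:ℝ) - 1) ^ s < (n:ℝ) ^ s := by
      rw [div_pow] at hMr
      have hkpow : (0:ℝ) < ((k:ℝ) - 1) ^ s := pow_pos (by linarith) s
      calc (M:ℝ) * ((k:ℝ) - 1) ^ s < ((n:ℝ) ^ s / ((k:ℝ) - 1) ^ s) * ((k:ℝ) - 1) ^ s :=
            mul_lt_mul_of_pos_right hMr hkpow
        _ = (n:ℝ) ^ s := div_mul_cancel₀ _ (ne_of_gt hkpow)
    have hcast : ((k:ℝ) - 1) = ((k - 1 : ℕ) : ℝ) := by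
      rw [Nat.cast_sub (by omega)]; norm_num
    rw [hcast] at key
    exact_mod_cast key
  -- Step 1b: M * (k-1).choose s < n.choose s
  have hcount : M * (k - 1).choose s < n.choose s := by
    have hr := choose_ratio (k - 1) n s (le_of_lt hk1n)
    have hpow : 0 < n ^ s := Nat.pow_pos (by omega)
    have hns : 0 < n.choose s := Nat.choose_pos hsn
    apply Nat.lt_of_mul_lt_mul_right (a := n ^ s)
    calc M * (k - 1).choose s * n ^ s = M * ((k - 1).choose s * n ^ s) := by ring
      _ ≤ M * (n.choose s * (k - 1) ^ s) := Nat.mul_le_mul_left M hr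
      _ = (M * (k - 1) ^ s) * n.choose s := by ring
      _ < n ^ s * n.choose s := (Nat.mul_lt_mul_right hns).mpr hnum
      _ = n.choose s * n ^ s := by ring
  -- closed neighbourhoods as finsets
  let Nc : V → Finset V := fun x => Finset.univ.filter (· ∈ closedNbhd G x)
  have hNc : ∀ x a, a ∈ Nc x ↔ a ∈ closedNbhd G x := by
    intro x a; simp [Nc]
  -- the forbidden sets, indexed by Sym2 V
  let f : V → V → Finset V := fun x y =>
    if x = y then (Nc x)ᶜ else (symmDiff (Nc x) (Nc y))ᶜ
  have hfsymm : ∀ x y, f x y = f y x := by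
    intro x y
    by_cases hxy : x = y
    · subst hxy; rfl
    · simp only [f, if_neg hxy, if_neg (Ne.symm hxy), symmDiff_comm]
  let D : Sym2 V → Finset V := Sym2.lift ⟨f, hfsymm⟩
  have hD : ∀ x y, D s(x, y) = f x y := fun x y => rfl
  -- each forbidden set has card ≤ k - 1
  have hDcard : ∀ p : Sym2 V, (D p).card ≤ k - 1 := by
    intro p
    induction p using Sym2.ind with
    | _ x y =>
    rw [hD]
    by_contra hc
    push_neg at hc
    have hkle : k ≤ (f x y).card := by omega
    obtain ⟨C, hCsub, hCcard⟩ := Finset.exists_subset_card_eq hkle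
    have hCid := h (↑C) (by rw [Set.ncard_coe_finset]; exact hCcard)
    by_cases hxy : x = y
    · subst hxy
      obtain ⟨a, ha⟩ := hCid.1 x
      have haC : a ∈ C := ha.2
      have h2 : a ∈ f x x := hCsub haC
      simp only [f, if_pos rfl] at h2
      rw [Finset.mem_compl, hNc] at h2
      exact h2 ha.1
    · apply hxy
      apply hCid.2 x y
      ext a
      simp only [Set.mem_inter_iff, Finset.mem_coe]
      constructor
      · rintro ⟨hax, haC⟩
        refine ⟨?_, haC⟩
        have := hCsub haC
        simp only [f, if_neg hxy, Finset.mem_compl, Finset.mem_symmDiff, hNc] at this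
        push_neg at this
        exact this.1 hax
      · rintro ⟨hay, haC⟩
        refine ⟨?_, haC⟩
        have := hCsub haC
        simp only [f, if_neg hxy, Finset.mem_compl, Finset.mem_symmDiff, hNc] at this
        push_neg at this
        exact this.2 hay
  -- counting
  let 𝒮 : Finset (Finset V) := Finset.powersetCard s Finset.univ
  have hScard : 𝒮.card = n.choose s := by
    rw [Finset.card_powersetCard, Finset.card_univ, hn]
  let Bad : Finset (Finset V) := 𝒮.filter (fun A => ∃ p : Sym2 V, A ⊆ D p)
  have hBadsub : Bad ⊆ Finset.univ.biUnion (fun p : Sym2 V => Finset.powersetCard s (D p)) := by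
    intro A hA
    rw [Finset.mem_filter] at hA
    obtain ⟨hAS, p, hp⟩ := hA
    rw [Finset.mem_biUnion]
    refine ⟨p, Finset.mem_univ p, ?_⟩
    rw [Finset.mem_powersetCard]
    rw [Finset.mem_powersetCard] at hAS
    exact ⟨hp, hAS.2⟩
  have hBadcard : Bad.card < 𝒮.card := by
    calc Bad.card ≤ (Finset.univ.biUnion (fun p : Sym2 V => Finset.powersetCard s (D p))).card :=
          Finset.card_le_card hBadsub
      _ ≤ ∑ p : Sym2 V, (Finset.powersetCard s (D p)).card := Finset.card_biUnion_le
      _ ≤ ∑ _p : Sym2 V, (k - 1).choose s := by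
          apply Finset.sum_le_sum
          intro p _
          rw [Finset.card_powersetCard]
          exact Nat.choose_le_choose s (hDcard p)
      _ = Fintype.card (Sym2 V) * (k - 1).choose s := by
          rw [Finset.sum_const, Finset.card_univ, smul_eq_mul]
      _ = M * (k - 1).choose s := by rw [Sym2.card, hn]
      _ < n.choose s := hcount
      _ = 𝒮.card := hScard.symm
  -- get a good set
  have hgood : ∃ A ∈ 𝒮, A ∉ Bad := by
    by_contra hc
    push_neg at hc
    have : 𝒮 ⊆ Bad := fun A hA => hc A hA
    exact absurd (Finset.card_le_card this) (by omega)
  obtain ⟨A, hAS, hABad⟩ := hgood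
  have hAcard : A.card = s := (Finset.mem_powersetCard.mp hAS).2
  have hAnosub : ∀ p : Sym2 V, ¬ A ⊆ D p := by
    intro p hp
    exact hABad (Finset.mem_filter.mpr ⟨hAS, p, hp⟩)
  refine ⟨↑A, by rw [Set.ncard_coe_finset]; exact hAcard, ?_, ?_⟩
  · -- nonempty
    intro x
    have := hAnosub s(x, x)
    rw [hD] at this
    simp only [f, if_pos rfl] at this
    rw [Finset.not_subset] at this
    obtain ⟨a, haA, ha⟩ := this
    rw [Finset.mem_compl, not_not, hNc] at ha
    exact ⟨a, ha, haA⟩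
  · -- injective
    intro x y hxy
    by_contra hne
    apply hAnosub s(x, y)
    rw [hD]
    simp only [f, if_neg hne]
    intro a haA
    rw [Finset.mem_compl, Finset.mem_symmDiff]
    push_neg
    constructor
    · intro hax
      rw [hNc] at hax
      have : a ∈ closedNbhd G x ∩ ↑A := ⟨hax, haA⟩
      rw [hxy] at this
      rw [hNc]
      exact this.1
    · intro hay
      rw [hNc] at hay
      have : a ∈ closedNbhd G y ∩ ↑A := ⟨hay, haA⟩
      rw [← hxy] at this
      rw [hNc]
      exact this.1
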